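/- If (f₀,…,f_n) is replaced by (h f₀, …, h f_n) for a nonvanishing entire function h, then the k-th derived curve transforms as F_k ↦ h^{k+1} F_k for every 0 ≤ k ≤ n. -/

import Mathlib

private lemma entire_iteratedDeriv {g : ℂ → ℂ} (hg : Differentiable ℂ g) (m : ℕ) :
    Differentiable ℂ (iteratedDeriv m g) := by
  induction m with
  | zero => simpa using hg
  | succ m ih =>
    rw [iteratedDeriv_succ]
    exact ((contDiff_infty_iff_deriv.mp ih.contDiff).2).differentiable (by simp)

private lemma choose_sum_key (m : ℕ) (a b : ℕ → ℂ) :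
    ∑ i ∈ Finset.range (m + 1),
        (m.choose i : ℂ) * (a (i + 1) * b (m - i) + a i * b (m - i + 1))
      = ∑ i ∈ Finset.range (m + 2), ((m + 1).choose i : ℂ) * (a i * b (m + 1 - i)) := by
  have hsplit : ∀ i, (m.choose i : ℂ) * (a (i + 1) * b (m - i) + a i * b (m - i + 1))
      = (m.choose i : ℂ) * (a (i + 1) * b (m - i))
        + (m.choose i : ℂ) * (a i * b (m - i + 1)) := fun i => by ring
  simp only [hsplit, Finset.sum_add_distrib]
  have hS2 : ∑ i ∈ Finset.range (m + 1), (m.choose i : ℂ) * (a i * b (m - i + 1))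
      = ∑ i ∈ Finset.range (m + 1), (m.choose i : ℂ) * (a i * b (m + 1 - i)) := by
    apply Finset.sum_congr rfl
    intro i hi
    have : m + 1 - i = m - i + 1 := by
      have : i ≤ m := by simpa [Nat.lt_succ_iff] using hi
      omega
    rw [this]
  rw [hS2, Finset.sum_range_succ' (fun i => (m.choose i : ℂ) * (a i * b (m + 1 - i))),
    Finset.sum_range_succ' (fun i => ((m + 1).choose i : ℂ) * (a i * b (m + 1 - i)))]
  simp only [Nat.succ_sub_succ, Nat.choose_zero_right, Nat.cast_one, one_mul,
    Nat.sub_zero]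
  have hext : ∑ i ∈ Finset.range m, (m.choose (i + 1) : ℂ) * (a (i + 1) * b (m - i))
      = ∑ i ∈ Finset.range (m + 1), (m.choose (i + 1) : ℂ) * (a (i + 1) * b (m - i)) := by
    rw [Finset.sum_range_succ, Nat.choose_succ_self]
    simp
  rw [hext, ← add_assoc, ← Finset.sum_add_distrib]
  congr 1
  apply Finset.sum_congr rfl
  intro i _
  rw [Nat.choose_succ_succ]
  push_cast
  ring

private lemma leibniz_iteratedDeriv {g₁ g₂ : ℂ → ℂ} (h₁ : Differentiable ℂ g₁)
    (h₂ : Differentiable ℂ g₂) (m : ℕ) :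
    iteratedDeriv m (fun t => g₁ t * g₂ t)
      = fun z => ∑ i ∈ Finset.range (m + 1),
          (m.choose i : ℂ) * (iteratedDeriv i g₁ z * iteratedDeriv (m - i) g₂ z) := by
  induction m with
  | zero => funext z; simp
  | succ m ih =>
    funext z
    rw [iteratedDeriv_succ, ih]
    rw [deriv_fun_sum (fun i _ => (show DifferentiableAt ℂ (fun z => (m.choose i : ℂ)
      * (iteratedDeriv i g₁ z * iteratedDeriv (m - i) g₂ z)) z from (((entire_iteratedDeriv h₁ i).mul
      (entire_iteratedDeriv h₂ (m - i))).const_mul ((m.choose i : ℂ))).differentiableAt))]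
    have hterm : ∀ i, deriv (fun z => (m.choose i : ℂ)
          * (iteratedDeriv i g₁ z * iteratedDeriv (m - i) g₂ z)) z
        = (m.choose i : ℂ) * (iteratedDeriv (i + 1) g₁ z * iteratedDeriv (m - i) g₂ z
            + iteratedDeriv i g₁ z * iteratedDeriv (m - i + 1) g₂ z) := by
      intro i
      rw [deriv_const_mul _ (show DifferentiableAt ℂ (fun z => iteratedDeriv i g₁ z
        * iteratedDeriv (m - i) g₂ z) z from ((entire_iteratedDeriv h₁ i).mul
        (entire_iteratedDeriv h₂ (m - i))).differentiableAt),
        deriv_fun_mul ((entire_iteratedDeriv h₁ i).differentiableAt)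
          ((entire_iteratedDeriv h₂ (m - i)).differentiableAt),
        ← iteratedDeriv_succ, ← iteratedDeriv_succ]
    rw [Finset.sum_congr rfl (fun i _ => hterm i)]
    exact choose_sum_key m (fun i => iteratedDeriv i g₁ z) (fun j => iteratedDeriv j g₂ z)

theorem derived_curve_transforms_under_common_factor
    (n : ℕ) (f : Fin (n + 1) → ℂ → ℂ) (h : ℂ → ℂ)
    (hf : ∀ i, Differentiable ℂ (f i))
    (hh : Differentiable ℂ h) (hne : ∀ z : ℂ, h z ≠ 0) :
    ∀ k ≤ n, ∀ (s : Finset (Fin (n + 1))) (hs : s.card = k + 1), ∀ z : ℂ,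
      Matrix.det (Matrix.of fun i j : Fin (k + 1) =>
          iteratedDeriv (i : ℕ) (fun t => h t * f (s.orderIsoOfFin hs j) t) z)
        = h z ^ (k + 1) * Matrix.det (Matrix.of fun i j : Fin (k + 1) =>
            iteratedDeriv (i : ℕ) (f (s.orderIsoOfFin hs j)) z) := by
  intro k hk s hs z
  set F : Fin (k + 1) → ℂ → ℂ := fun j => f (s.orderIsoOfFin hs j) with hF
  set A : Matrix (Fin (k + 1)) (Fin (k + 1)) ℂ := Matrix.of fun i m =>
    if (m : ℕ) ≤ (i : ℕ) then ((i : ℕ).choose (m : ℕ) : ℂ)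
      * iteratedDeriv ((i : ℕ) - (m : ℕ)) h z else 0 with hA
  set B : Matrix (Fin (k + 1)) (Fin (k + 1)) ℂ := Matrix.of fun m j : Fin (k + 1) =>
    iteratedDeriv (m : ℕ) (F j) z with hB
  have hAB : (Matrix.of fun i j : Fin (k + 1) =>
      iteratedDeriv (i : ℕ) (fun t => h t * F j t) z) = A * B := by
    ext i j
    rw [Matrix.mul_apply]
    simp only [hA, hB, Matrix.of_apply]
    have hcomm : (fun t => h t * F j t) = fun t => F j t * h t :=
      funext fun t => mul_comm _ _
    rw [hcomm, leibniz_iteratedDeriv (hf _) hh]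
    rw [Fin.sum_univ_eq_sum_range (fun m =>
      (if m ≤ (i : ℕ) then ((i : ℕ).choose m : ℂ) * iteratedDeriv ((i : ℕ) - m) h z else 0)
        * iteratedDeriv m (F j) z) (k + 1)]
    rw [← Finset.sum_subset (Finset.range_subset_range.mpr (by omega : (i : ℕ) + 1 ≤ k + 1))
      (fun l _ hl => by
        rw [if_neg (by simpa [Nat.lt_succ_iff, not_le] using
          (fun hle => hl (Finset.mem_range.mpr (Nat.lt_succ_of_le hle)) : ¬ l ≤ (i : ℕ))),
          zero_mul])]
    apply Finset.sum_congr rfl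
    intro l hl
    rw [if_pos (by simpa [Nat.lt_succ_iff] using hl)]
    ring
  have hdetA : A.det = h z ^ (k + 1) := by
    rw [Matrix.det_of_lowerTriangular A (fun i j hij => by
      simp only [hA, Matrix.of_apply]
      rw [if_neg]
      exact not_le.mpr (by exact_mod_cast hij))]
    have : ∀ i : Fin (k + 1), A i i = h z := by
      intro i
      simp [hA, Nat.choose_self]
    rw [Finset.prod_congr rfl (fun i _ => this i)]
    simp
  rw [hAB, Matrix.det_mul, hdetA]
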